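/- Under the standing assumptions on (A, B, F): (a) for all ℓ, ℓ' ∈ (A*)^B the product ℓ * ℓ' again lies in (A*)^B; (b) the product * is associative on (A*)^B; (c) the counit ε belongs to (A*)^B and is a two-sided unit for *, i.e., ε * ℓ = ℓ * ε = ℓ for all ℓ ∈ (A*)^B. Hence ((A*)^B, *, ε) is an associative unital k-algebra. -/

import Mathlib

open TensorProduct

variable (k A : Type*) [CommRing k] [Ring A] [Bialgebra k A]

/-- The submodule `X ⊗̄ Y` of `A ⊗ A` spanned by elementary tensors from `X` and `Y`. -/
def tens2 (X Y : Set A) : Submodule k (A ⊗[k] A) :=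
  Submodule.span k {z | ∃ x ∈ X, ∃ y ∈ Y, z = x ⊗ₜ[k] y}

/-- The submodule `X ⊗̄ Y ⊗̄ Z` of `(A ⊗ A) ⊗ A`. -/
def tens3 (X Y Z : Set A) : Submodule k ((A ⊗[k] A) ⊗[k] A) :=
  Submodule.span k {w | ∃ x ∈ X, ∃ y ∈ Y, ∃ z ∈ Z, w = (x ⊗ₜ[k] y) ⊗ₜ[k] z}

/-- `ℓ ⊗ ℓ'` as a linear form on `A ⊗ A` (composite `A ⊗ A → k ⊗ k ≅ k`). -/
noncomputable def pairForm (ℓ ℓ' : A →ₗ[k] k) : A ⊗[k] A →ₗ[k] k :=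
  (TensorProduct.lid k k).toLinearMap ∘ₗ TensorProduct.map ℓ ℓ'

/-- The twisted product `(ℓ * ℓ')(a) = (ℓ ⊗ ℓ')(Δ(a)·F⁻¹)`, where `Finv = F⁻¹`. -/
noncomputable def starProd (Finv : A ⊗[k] A) (ℓ ℓ' : A →ₗ[k] k) : A →ₗ[k] k :=
  pairForm k A ℓ ℓ' ∘ₗ LinearMap.mulRight k Finv ∘ₗ Coalgebra.comul

/-- `(A*)^B`: the right `B`-invariant linear forms on `A`. -/
def invForms (S : Set A) : Set (A →ₗ[k] k) :=
  {ℓ | ∀ a : A, ∀ b ∈ S, ℓ (a * b) = ℓ a * Coalgebra.counit (R := k) b}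

/-- `Δ ⊗ id` as a map `A ⊗ A → (A ⊗ A) ⊗ A`. -/
noncomputable def DeltaId : A ⊗[k] A →ₗ[k] (A ⊗[k] A) ⊗[k] A :=
  TensorProduct.map Coalgebra.comul LinearMap.id

/-- `id ⊗ Δ` as a map `A ⊗ A → (A ⊗ A) ⊗ A` (reassociated). -/
noncomputable def IdDelta : A ⊗[k] A →ₗ[k] (A ⊗[k] A) ⊗[k] A :=
  (TensorProduct.assoc k A A A).symm.toLinearMap ∘ₗ
    TensorProduct.map LinearMap.id Coalgebra.comul

/-- `1 ⊗ x` as an element of `(A ⊗ A) ⊗ A`, for `x : A ⊗ A`. -/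
noncomputable def oneTens (x : A ⊗[k] A) : (A ⊗[k] A) ⊗[k] A :=
  (TensorProduct.assoc k A A A).symm ((1 : A) ⊗ₜ[k] x)

/-- `Φ_B = (F⊗1)·((Δ⊗id)F)·((1⊗F)·((id⊗Δ)F))⁻¹`, written using `F⁻¹ = Finv`. -/
noncomputable def PhiB (F Finv : A ⊗[k] A) : (A ⊗[k] A) ⊗[k] A :=
  (F ⊗ₜ[k] (1 : A)) * DeltaId k A F * IdDelta k A Finv * oneTens k A Finv

/-! ### auxiliary lemmas -/

lemma pairForm_tmul (ℓ ℓ' : A →ₗ[k] k) (x y : A) :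
    pairForm k A ℓ ℓ' (x ⊗ₜ[k] y) = ℓ x * ℓ' y := by
  simp [pairForm, smul_eq_mul]

lemma starProd_apply (Finv : A ⊗[k] A) (ℓ ℓ' : A →ₗ[k] k) (a : A) :
    starProd k A Finv ℓ ℓ' a = pairForm k A ℓ ℓ' (Coalgebra.comul a * Finv) := rfl

noncomputable def triForm (ℓ ℓ' ℓ'' : A →ₗ[k] k) : (A ⊗[k] A) ⊗[k] A →ₗ[k] k :=
  (TensorProduct.lid k k).toLinearMap ∘ₗ TensorProduct.map (pairForm k A ℓ ℓ') ℓ''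

lemma triForm_tmul (ℓ ℓ' ℓ'' : A →ₗ[k] k) (u : A ⊗[k] A) (z : A) :
    triForm k A ℓ ℓ' ℓ'' (u ⊗ₜ[k] z) = pairForm k A ℓ ℓ' u * ℓ'' z := by
  simp [triForm, smul_eq_mul]

noncomputable def epsIdA : A ⊗[k] A →ₐ[k] A :=
  (Algebra.TensorProduct.lid k A).toAlgHom.comp
    (Algebra.TensorProduct.map (Bialgebra.counitAlgHom k A) (AlgHom.id k A))

lemma epsIdA_tmul (x y : A) :
    epsIdA k A (x ⊗ₜ[k] y) = Coalgebra.counit (R := k) x • y := by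
  simp [epsIdA]

lemma epsIdA_apply (x : A ⊗[k] A) :
    epsIdA k A x = TensorProduct.lid k A
      (TensorProduct.map Coalgebra.counit LinearMap.id x) := by
  induction x using TensorProduct.induction_on with
  | zero => simp
  | tmul x y => simp [epsIdA_tmul]
  | add x y hx hy => simp [map_add, hx, hy]

lemma epsIdA_comul (a : A) : epsIdA k A (Coalgebra.comul a) = a := by
  rw [epsIdA_apply]
  have h : TensorProduct.map (Coalgebra.counit (R := k)) (LinearMap.id (M := A))
      (Coalgebra.comul a) = (1 : k) ⊗ₜ[k] a := Coalgebra.rTensor_counit_comul a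
  rw [h]; simp

noncomputable def idEpsA : A ⊗[k] A →ₐ[k] A :=
  (Algebra.TensorProduct.rid k k A).toAlgHom.comp
    (Algebra.TensorProduct.map (AlgHom.id k A) (Bialgebra.counitAlgHom k A))

lemma idEpsA_tmul (x y : A) :
    idEpsA k A (x ⊗ₜ[k] y) = Coalgebra.counit (R := k) y • x := by
  simp [idEpsA]

lemma idEpsA_apply (x : A ⊗[k] A) :
    idEpsA k A x = TensorProduct.rid k A
      (TensorProduct.map LinearMap.id Coalgebra.counit x) := by
  induction x using TensorProduct.induction_on with
  | zero => simp
  | tmul x y => simp [idEpsA_tmul]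
  | add x y hx hy => simp [map_add, hx, hy]

lemma idEpsA_comul (a : A) : idEpsA k A (Coalgebra.comul a) = a := by
  rw [idEpsA_apply]
  have h : TensorProduct.map (LinearMap.id (M := A)) (Coalgebra.counit (R := k))
      (Coalgebra.comul a) = a ⊗ₜ[k] (1 : k) := Coalgebra.lTensor_counit_comul a
  rw [h]; simp

lemma pairForm_eps_left (ℓ : A →ₗ[k] k) (x : A ⊗[k] A) :
    pairForm k A Coalgebra.counit ℓ x = ℓ (epsIdA k A x) := by
  induction x using TensorProduct.induction_on with
  | zero => simp
  | tmul x y => rw [pairForm_tmul, epsIdA_tmul, map_smul, smul_eq_mul]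
  | add x y hx hy => simp [map_add, hx, hy]

lemma pairForm_eps_right (ℓ : A →ₗ[k] k) (x : A ⊗[k] A) :
    pairForm k A ℓ Coalgebra.counit x = ℓ (idEpsA k A x) := by
  induction x using TensorProduct.induction_on with
  | zero => simp
  | tmul x y => rw [pairForm_tmul, idEpsA_tmul, map_smul, smul_eq_mul, mul_comm]
  | add x y hx hy => simp [map_add, hx, hy]

/-- `eps2 = ε ⊗ ε` is multiplicative. -/
lemma eps2_mul (x y : A ⊗[k] A) :
    pairForm k A Coalgebra.counit Coalgebra.counit (x * y)
      = pairForm k A Coalgebra.counit Coalgebra.counit x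
        * pairForm k A Coalgebra.counit Coalgebra.counit y := by
  rw [pairForm_eps_left, pairForm_eps_left, pairForm_eps_left, map_mul,
    Bialgebra.counit_mul]

lemma eps2_comul (b : A) :
    pairForm k A Coalgebra.counit Coalgebra.counit (Coalgebra.comul (R := k) b)
      = Coalgebra.counit (R := k) b := by
  rw [pairForm_eps_left, epsIdA_comul]

lemma eps2_one :
    pairForm k A Coalgebra.counit Coalgebra.counit (1 : A ⊗[k] A) = 1 := by
  rw [pairForm_eps_left, map_one, Bialgebra.counit_one]

/-! ### the invariance pairing lemmas -/

lemma key2 {B : Subalgebra k A} {ℓ ℓ' : A →ₗ[k] k}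
    (hℓ : ℓ ∈ invForms k A (B : Set A)) (hℓ' : ℓ' ∈ invForms k A (B : Set A))
    {z : A ⊗[k] A} (hz : z ∈ tens2 k A (B : Set A) (B : Set A)) (x : A ⊗[k] A) :
    pairForm k A ℓ ℓ' (x * z) = pairForm k A ℓ ℓ' x *
      pairForm k A Coalgebra.counit Coalgebra.counit z := by
  induction hz using Submodule.span_induction with
  | mem z hzmem =>
    obtain ⟨b, hb, b', hb', rfl⟩ := hzmem
    induction x using TensorProduct.induction_on with
    | zero => simp
    | tmul a a' =>
      rw [Algebra.TensorProduct.tmul_mul_tmul, pairForm_tmul, pairForm_tmul,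
        pairForm_tmul, hℓ a b hb, hℓ' a' b' hb']
      ring
    | add x y hx hy =>
      rw [add_mul, map_add, map_add, hx, hy, add_mul]
  | zero => simp
  | add z w hzmem hwmem hz hw =>
    rw [mul_add, map_add, map_add, hz, hw, mul_add]
  | smul c z hzmem hz =>
    rw [mul_smul_comm, map_smul, map_smul, hz, smul_eq_mul, smul_eq_mul]
    ring

lemma key3 {B : Subalgebra k A} {ℓ ℓ' ℓ'' : A →ₗ[k] k}
    (hℓ : ℓ ∈ invForms k A (B : Set A)) (hℓ' : ℓ' ∈ invForms k A (B : Set A))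
    (hℓ'' : ℓ'' ∈ invForms k A (B : Set A))
    {z : (A ⊗[k] A) ⊗[k] A} (hz : z ∈ tens3 k A (B : Set A) (B : Set A) (B : Set A))
    (x : (A ⊗[k] A) ⊗[k] A) :
    triForm k A ℓ ℓ' ℓ'' (x * z) = triForm k A ℓ ℓ' ℓ'' x *
      triForm k A Coalgebra.counit Coalgebra.counit Coalgebra.counit z := by
  induction hz using Submodule.span_induction with
  | mem z hzmem =>
    obtain ⟨b, hb, b', hb', b'', hb'', rfl⟩ := hzmem
    have hbB : (b ⊗ₜ[k] b' : A ⊗[k] A) ∈ tens2 k A (B : Set A) (B : Set A) :=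
      Submodule.subset_span ⟨b, hb, b', hb', rfl⟩
    induction x using TensorProduct.induction_on with
    | zero => simp
    | tmul u c =>
      rw [Algebra.TensorProduct.tmul_mul_tmul, triForm_tmul, triForm_tmul, triForm_tmul,
        key2 k A hℓ hℓ' hbB, hℓ'' c b'' hb'']
      ring
    | add x y hx hy =>
      rw [add_mul, map_add, map_add, hx, hy, add_mul]
  | zero => simp
  | add z w hzmem hwmem hz hw =>
    rw [mul_add, map_add, map_add, hz, hw, mul_add]
  | smul c z hzmem hz =>
    rw [mul_smul_comm, map_smul, map_smul, hz, smul_eq_mul, smul_eq_mul]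
    ring

/-! ### the triple counit form as (ε ∘ algebra hom) -/

noncomputable def collapse3 : (A ⊗[k] A) ⊗[k] A →ₐ[k] A :=
  (epsIdA k A).comp (Algebra.TensorProduct.map (epsIdA k A) (AlgHom.id k A))

lemma collapse3_tmul (u : A ⊗[k] A) (z : A) :
    collapse3 k A (u ⊗ₜ[k] z) = epsIdA k A ((epsIdA k A u) ⊗ₜ[k] z) := by
  simp [collapse3]

lemma triForm_eee (x : (A ⊗[k] A) ⊗[k] A) :
    triForm k A Coalgebra.counit Coalgebra.counit Coalgebra.counit x
      = Coalgebra.counit (R := k) (collapse3 k A x) := by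
  induction x using TensorProduct.induction_on with
  | zero => simp
  | tmul u z =>
    rw [triForm_tmul, collapse3_tmul, pairForm_eps_left, epsIdA_tmul, map_smul,
      smul_eq_mul]
  | add x y hx hy => simp [map_add, hx, hy]

lemma E3_mul (x y : (A ⊗[k] A) ⊗[k] A) :
    triForm k A Coalgebra.counit Coalgebra.counit Coalgebra.counit (x * y)
      = triForm k A Coalgebra.counit Coalgebra.counit Coalgebra.counit x
        * triForm k A Coalgebra.counit Coalgebra.counit Coalgebra.counit y := by
  rw [triForm_eee, triForm_eee, triForm_eee, map_mul, Bialgebra.counit_mul]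

lemma triForm_assocSymm (ℓ ℓ' ℓ'' : A →ₗ[k] k) (x : A) (w : A ⊗[k] A) :
    triForm k A ℓ ℓ' ℓ'' ((TensorProduct.assoc k A A A).symm (x ⊗ₜ[k] w))
      = ℓ x * pairForm k A ℓ' ℓ'' w := by
  induction w using TensorProduct.induction_on with
  | zero => rw [tmul_zero, LinearEquiv.map_zero, map_zero, map_zero, mul_zero]
  | tmul y z =>
    rw [TensorProduct.assoc_symm_tmul, triForm_tmul, pairForm_tmul, pairForm_tmul,
      mul_assoc]
  | add w1 w2 h1 h2 => simp only [tmul_add, map_add, h1, h2, mul_add]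

lemma DeltaId_tmul (x y : A) :
    DeltaId k A (x ⊗ₜ[k] y) = (Coalgebra.comul (R := k) x) ⊗ₜ[k] y := by
  simp [DeltaId]

lemma IdDelta_tmul (x y : A) :
    IdDelta k A (x ⊗ₜ[k] y)
      = (TensorProduct.assoc k A A A).symm (x ⊗ₜ[k] (Coalgebra.comul (R := k) y)) := by
  simp [IdDelta]

lemma E3_DeltaId (x : A ⊗[k] A) :
    triForm k A Coalgebra.counit Coalgebra.counit Coalgebra.counit (DeltaId k A x)
      = pairForm k A Coalgebra.counit Coalgebra.counit x := by
  induction x using TensorProduct.induction_on with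
  | zero => simp
  | tmul x y => rw [DeltaId_tmul, triForm_tmul, eps2_comul, pairForm_tmul]
  | add x y hx hy => simp only [map_add, hx, hy]

lemma E3_IdDelta (x : A ⊗[k] A) :
    triForm k A Coalgebra.counit Coalgebra.counit Coalgebra.counit (IdDelta k A x)
      = pairForm k A Coalgebra.counit Coalgebra.counit x := by
  induction x using TensorProduct.induction_on with
  | zero => simp
  | tmul x y => rw [IdDelta_tmul, triForm_assocSymm, eps2_comul, pairForm_tmul]
  | add x y hx hy => simp only [map_add, hx, hy]

lemma E3_oneTens (w : A ⊗[k] A) :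
    triForm k A Coalgebra.counit Coalgebra.counit Coalgebra.counit (oneTens k A w)
      = pairForm k A Coalgebra.counit Coalgebra.counit w := by
  rw [oneTens, triForm_assocSymm, Bialgebra.counit_one, one_mul]

/-! ### multiplicativity of `DeltaId`, `IdDelta` -/

lemma DeltaId_eq : DeltaId k A =
    (Algebra.TensorProduct.map (Bialgebra.comulAlgHom k A) (AlgHom.id k A)).toLinearMap :=
  TensorProduct.ext' fun x y => by simp [DeltaId]

lemma DeltaId_mul (x y : A ⊗[k] A) :
    DeltaId k A (x * y) = DeltaId k A x * DeltaId k A y := by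
  rw [DeltaId_eq]; exact map_mul (Algebra.TensorProduct.map (Bialgebra.comulAlgHom k A)
    (AlgHom.id k A)) x y

lemma DeltaId_one : DeltaId k A (1 : A ⊗[k] A) = 1 := by
  rw [DeltaId_eq]
  exact map_one (Algebra.TensorProduct.map (Bialgebra.comulAlgHom k A) (AlgHom.id k A))

lemma assocSymm_mul (x y : A ⊗[k] (A ⊗[k] A)) :
    (TensorProduct.assoc k A A A).symm (x * y)
      = (TensorProduct.assoc k A A A).symm x * (TensorProduct.assoc k A A A).symm y :=
  map_mul (Algebra.TensorProduct.assoc k k k A A A).symm x y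

lemma mapIdComul_eq :
    (TensorProduct.map (LinearMap.id (M := A)) (Coalgebra.comul (R := k)))
      = (Algebra.TensorProduct.map (AlgHom.id k A) (Bialgebra.comulAlgHom k A)).toLinearMap :=
  TensorProduct.ext' fun x y => by simp

lemma IdDelta_eq : IdDelta k A =
    (((Algebra.TensorProduct.assoc k k k A A A).symm.toAlgHom).comp
      (Algebra.TensorProduct.map (AlgHom.id k A) (Bialgebra.comulAlgHom k A))).toLinearMap :=
  TensorProduct.ext' fun x y => by
    show (TensorProduct.assoc k A A A).symm
        (TensorProduct.map LinearMap.id Coalgebra.comul (x ⊗ₜ[k] y)) = _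
    rw [mapIdComul_eq]
    rfl

lemma IdDelta_mul (x y : A ⊗[k] A) :
    IdDelta k A (x * y) = IdDelta k A x * IdDelta k A y := by
  rw [IdDelta_eq]
  exact map_mul (((Algebra.TensorProduct.assoc k k k A A A).symm.toAlgHom).comp
    (Algebra.TensorProduct.map (AlgHom.id k A) (Bialgebra.comulAlgHom k A))) x y

/-! ### the two sides of associativity as triple forms -/

lemma pair_star_left (Finv : A ⊗[k] A) (ℓ ℓ' ℓ'' : A →ₗ[k] k) (u : A ⊗[k] A) :
    pairForm k A (starProd k A Finv ℓ ℓ') ℓ'' u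
      = triForm k A ℓ ℓ' ℓ'' (DeltaId k A u * (Finv ⊗ₜ[k] (1 : A))) := by
  induction u using TensorProduct.induction_on with
  | zero => simp
  | tmul x y =>
    rw [pairForm_tmul, DeltaId_tmul, Algebra.TensorProduct.tmul_mul_tmul, mul_one,
      triForm_tmul, starProd_apply]
  | add x y hx hy => simp only [map_add, add_mul, hx, hy]

lemma pair_star_right (Finv : A ⊗[k] A) (ℓ ℓ' ℓ'' : A →ₗ[k] k) (u : A ⊗[k] A) :
    pairForm k A ℓ (starProd k A Finv ℓ' ℓ'') u
      = triForm k A ℓ ℓ' ℓ'' (IdDelta k A u * oneTens k A Finv) := by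
  induction u using TensorProduct.induction_on with
  | zero => simp
  | tmul x y =>
    rw [pairForm_tmul, IdDelta_tmul, oneTens, ← assocSymm_mul,
      Algebra.TensorProduct.tmul_mul_tmul, mul_one, triForm_assocSymm, starProd_apply]
  | add x y hx hy => simp only [map_add, add_mul, hx, hy]

lemma coassoc' (a : A) : DeltaId k A (Coalgebra.comul a) = IdDelta k A (Coalgebra.comul a) := by
  have h := Coalgebra.coassoc_symm_apply (R := k) (a := a)
  exact h.symm

/-! ### the key twisting identity -/

lemma Xmul_key (F Finv : A ⊗[k] A) (hinv2 : Finv * F = 1) (a : A) :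
    DeltaId k A (Coalgebra.comul a * Finv) * (Finv ⊗ₜ[k] (1 : A)) * PhiB k A F Finv
      = IdDelta k A (Coalgebra.comul a * Finv) * oneTens k A Finv := by
  have h1 : (Finv ⊗ₜ[k] (1 : A)) * (F ⊗ₜ[k] (1 : A)) = 1 := by
    rw [Algebra.TensorProduct.tmul_mul_tmul, hinv2, one_mul]
    rfl
  have h2 : DeltaId k A Finv * DeltaId k A F = 1 := by
    rw [← DeltaId_mul, hinv2, DeltaId_one]
  rw [DeltaId_mul, IdDelta_mul, coassoc', PhiB]
  simp only [mul_assoc]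
  rw [← mul_assoc (Finv ⊗ₜ[k] (1 : A)) (F ⊗ₜ[k] (1 : A)), h1, one_mul,
    ← mul_assoc (DeltaId k A Finv) (DeltaId k A F), h2, one_mul]

lemma E3_Phi (F Finv : A ⊗[k] A) (hinv1 : F * Finv = 1)
    (hcF1 : TensorProduct.lid k A (TensorProduct.map Coalgebra.counit LinearMap.id F) = 1) :
    triForm k A Coalgebra.counit Coalgebra.counit Coalgebra.counit (PhiB k A F Finv) = 1 := by
  have hF : pairForm k A Coalgebra.counit Coalgebra.counit F = 1 := by
    rw [pairForm_eps_left, epsIdA_apply, hcF1, Bialgebra.counit_one]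
  have hFinv : pairForm k A Coalgebra.counit Coalgebra.counit Finv = 1 := by
    have := eps2_mul k A F Finv
    rw [hinv1, eps2_one, hF, one_mul] at this
    exact this.symm
  rw [PhiB, E3_mul, E3_mul, E3_mul, E3_oneTens, E3_IdDelta, E3_DeltaId, hF, hFinv,
    triForm_tmul, hF, Bialgebra.counit_one]
  ring

theorem stmt7 (B : Subalgebra k A) (F Finv : A ⊗[k] A)
    (hinv1 : F * Finv = 1) (hinv2 : Finv * F = 1)
    (hcF1 : TensorProduct.lid k A (TensorProduct.map Coalgebra.counit LinearMap.id F) = 1)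
    (hcF2 : TensorProduct.rid k A (TensorProduct.map LinearMap.id Coalgebra.counit F) = 1)
    (hFB : ∀ b ∈ B, F * Coalgebra.comul (R := k) b * Finv ∈ tens2 k A (B : Set A) (B : Set A))
    (hPhi : PhiB k A F Finv ∈ tens3 k A (B : Set A) (B : Set A) (B : Set A)) :
    (∀ ℓ ∈ invForms k A (B : Set A), ∀ ℓ' ∈ invForms k A (B : Set A),
        starProd k A Finv ℓ ℓ' ∈ invForms k A (B : Set A)) ∧
    (∀ ℓ ∈ invForms k A (B : Set A), ∀ ℓ' ∈ invForms k A (B : Set A),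
        ∀ ℓ'' ∈ invForms k A (B : Set A),
        starProd k A Finv (starProd k A Finv ℓ ℓ') ℓ'' =
          starProd k A Finv ℓ (starProd k A Finv ℓ' ℓ'')) ∧
    ((Coalgebra.counit : A →ₗ[k] k) ∈ invForms k A (B : Set A) ∧
      ∀ ℓ ∈ invForms k A (B : Set A),
        starProd k A Finv (Coalgebra.counit : A →ₗ[k] k) ℓ = ℓ ∧
          starProd k A Finv ℓ (Coalgebra.counit : A →ₗ[k] k) = ℓ) := by
  -- basic counit values of F and Finv
  have hF2 : pairForm k A Coalgebra.counit Coalgebra.counit F = 1 := by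
    rw [pairForm_eps_left, epsIdA_apply, hcF1, Bialgebra.counit_one]
  have hFinv2 : pairForm k A Coalgebra.counit Coalgebra.counit Finv = 1 := by
    have h := eps2_mul k A F Finv
    rw [hinv1, eps2_one, hF2, one_mul] at h
    exact h.symm
  refine ⟨?_, ?_, ?_, ?_⟩
  · -- closure
    intro ℓ hℓ ℓ' hℓ' a b hb
    have hre : (Coalgebra.comul a * Finv) * (F * Coalgebra.comul b * Finv)
        = Coalgebra.comul (R := k) (a * b) * Finv := by
      rw [Bialgebra.comul_mul]
      calc (Coalgebra.comul a * Finv) * (F * Coalgebra.comul b * Finv)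
          = Coalgebra.comul a * ((Finv * F) * (Coalgebra.comul b * Finv)) := by
            simp only [mul_assoc]
        _ = Coalgebra.comul a * (Coalgebra.comul b * Finv) := by rw [hinv2, one_mul]
        _ = Coalgebra.comul a * Coalgebra.comul (R := k) b * Finv := by rw [mul_assoc]
    rw [starProd_apply, starProd_apply, ← hre, key2 k A hℓ hℓ' (hFB b hb)]
    congr 1
    rw [eps2_mul, eps2_mul, hF2, hFinv2, eps2_comul, one_mul, mul_one]
  · -- associativity
    intro ℓ hℓ ℓ' hℓ' ℓ'' hℓ''
    ext a
    rw [starProd_apply, starProd_apply, pair_star_left, pair_star_right,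
      ← Xmul_key k A F Finv hinv2 a, key3 k A hℓ hℓ' hℓ'' hPhi,
      E3_Phi k A F Finv hinv1 hcF1, mul_one]
  · -- counit is invariant
    intro a b hb
    exact Bialgebra.counit_mul a b
  · -- counit is a unit
    have h1 : epsIdA k A F = 1 := by rw [epsIdA_apply, hcF1]
    have h2 : epsIdA k A Finv = 1 := by
      have h := map_mul (epsIdA k A) Finv F
      rw [hinv2, map_one, h1, mul_one] at h
      exact h.symm
    have h3 : idEpsA k A F = 1 := by rw [idEpsA_apply, hcF2]
    have h4 : idEpsA k A Finv = 1 := by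
      have h := map_mul (idEpsA k A) Finv F
      rw [hinv2, map_one, h3, mul_one] at h
      exact h.symm
    intro ℓ hℓ
    constructor
    · ext a
      rw [starProd_apply, pairForm_eps_left, map_mul, epsIdA_comul, h2, mul_one]
    · ext a
      rw [starProd_apply, pairForm_eps_right, map_mul, idEpsA_comul, h4, mul_one]
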